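/- Let μ be a Borel probability measure on the torus 𝕋 = ℝ/ℤ, and suppose the n-fold convolution μⁿ has an absolutely continuous part with density bounded below by a constant c > 0 almost everywhere. Then for every f ∈ L^p(𝕋), 1 ≤ p ≤ ∞, with ∫_𝕋 f = 0: ‖f − f∗μ‖_{L^p(𝕋)} ≥ (c/n)·‖f‖_{L^p(𝕋)}. -/

import Mathlib

open MeasureTheory
open scoped ENNReal

/-- Convolution of two measures on the torus `𝕋 = ℝ/ℤ`. -/
noncomputable def mconv (μ ν : Measure (AddCircle (1 : ℝ))) :
    Measure (AddCircle (1 : ℝ)) :=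
  Measure.map (fun p : AddCircle (1 : ℝ) × AddCircle (1 : ℝ) => p.1 + p.2) (μ.prod ν)

/-- The `n`-fold convolution power `μⁿ = μ ∗ ⋯ ∗ μ` (with `μ⁰ = δ₀`). -/
noncomputable def mconvPow (μ : Measure (AddCircle (1 : ℝ))) : ℕ → Measure (AddCircle (1 : ℝ))
  | 0 => Measure.dirac 0
  | n + 1 => mconv (mconvPow μ n) μ

/-- The convolution `f ∗ μ` of a function with a measure:
`(f ∗ μ)(x) = 𝔼 f(x - Y) = ∫ f(x - y) dμ(y)`. -/
noncomputable def fconv (f : AddCircle (1 : ℝ) → ℝ) (μ : Measure (AddCircle (1 : ℝ))) :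
    AddCircle (1 : ℝ) → ℝ :=
  fun x => ∫ y, f (x - y) ∂μ

section Aux

local notation "𝕋" => AddCircle (1 : ℝ)

namespace Stmt19

lemma vol_univ : (volume : Measure 𝕋) Set.univ = 1 := by
  simpa using AddCircle.measure_univ (T := (1:ℝ))

lemma qmp (ν : Measure 𝕋) [SFinite ν] :
    Measure.QuasiMeasurePreserving (fun z : 𝕋 × 𝕋 => z.1 - z.2) (volume.prod ν) volume := by
  constructor
  · exact measurable_fst.sub measurable_snd
  · have h1 : (fun z : 𝕋 × 𝕋 => z.1 - z.2)
        = Prod.fst ∘ (fun z : 𝕋 × 𝕋 => (z.1 - z.2, z.2)) := rfl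
    rw [h1, ← Measure.map_map (f := fun z : 𝕋 × 𝕋 => (z.1 - z.2, z.2)) measurable_fst
        ((measurable_fst.sub measurable_snd).prodMk measurable_snd),
      (measurePreserving_sub_prod volume ν).map_eq, Measure.map_fst_prod]
    exact Measure.smul_absolutelyContinuous

lemma lint_shift (g : 𝕋 → ℝ≥0∞) (y : 𝕋) : ∫⁻ x, g (x - y) ∂volume = ∫⁻ x, g x ∂volume :=
  lintegral_sub_right_eq_self g y

/-- Jensen / Hölder with the constant function. -/
lemma jensen {α : Type*} [MeasurableSpace α] (ν : Measure α) [IsFiniteMeasure ν]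
    {g : α → ℝ≥0∞} (hg : AEMeasurable g ν) {q : ℝ} (hq : 1 ≤ q) :
    (∫⁻ y, g y ∂ν) ^ q ≤ (ν Set.univ) ^ (q - 1) * ∫⁻ y, g y ^ q ∂ν := by
  rcases eq_or_lt_of_le hq with h1 | h1
  · simp [← h1]
  · have hqr : q.HolderConjugate (Real.conjExponent q) := Real.HolderConjugate.conjExponent h1
    set r := Real.conjExponent q with hr
    have key : ∫⁻ y, g y * 1 ∂ν
        ≤ (∫⁻ y, g y ^ q ∂ν) ^ (1/q) * (∫⁻ y, (1:ℝ≥0∞) ^ r ∂ν) ^ (1/r) :=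
      ENNReal.lintegral_mul_le_Lp_mul_Lq ν hqr hg aemeasurable_const
    simp only [mul_one, ENNReal.one_rpow, lintegral_one] at key
    have hq0 : (0:ℝ) < q := hqr.pos
    have hexp : (1/r) * q = q - 1 := by
      rw [one_div, mul_comm, ← div_eq_mul_inv, hqr.div_conj_eq_sub_one]
    calc (∫⁻ y, g y ∂ν) ^ q
        ≤ ((∫⁻ y, g y ^ q ∂ν) ^ (1/q) * (ν Set.univ) ^ (1/r)) ^ q :=
          ENNReal.rpow_le_rpow key (le_of_lt hq0)
      _ = (∫⁻ y, g y ^ q ∂ν) * (ν Set.univ) ^ (q - 1) := by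
          rw [ENNReal.mul_rpow_of_nonneg _ _ (le_of_lt hq0), ← ENNReal.rpow_mul,
            ← ENNReal.rpow_mul, one_div_mul_cancel (ne_of_gt hq0), ENNReal.rpow_one, hexp]
      _ = (ν Set.univ) ^ (q - 1) * ∫⁻ y, g y ^ q ∂ν := mul_comm _ _

/-- Young's inequality, strongly measurable case. -/
lemma young_sm (ν : Measure 𝕋) [IsFiniteMeasure ν] {f : 𝕋 → ℝ} (hf : StronglyMeasurable f)
    {p : ℝ≥0∞} (hp : 1 ≤ p) :
    eLpNorm (fconv f ν) p volume ≤ ν Set.univ * eLpNorm f p volume := by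
  have hp0 : p ≠ 0 := by
    intro h; rw [h] at hp; exact absurd hp (by simp)
  have hFm : Measurable (fun z : 𝕋 × 𝕋 => (‖f (z.1 - z.2)‖₊ : ℝ≥0∞)) :=
    (hf.measurable.comp (measurable_fst.sub measurable_snd)).nnnorm.coe_nnreal_ennreal
  have hbound : ∀ x, (‖fconv f ν x‖₊ : ℝ≥0∞) ≤ ∫⁻ y, (‖f (x - y)‖₊ : ℝ≥0∞) ∂ν := fun x =>
    enorm_integral_le_lintegral_enorm _
  rcases eq_or_ne p ∞ with hptop | hptop
  · subst hptop
    rw [eLpNorm_exponent_top, eLpNorm_exponent_top]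
    show essSup (fun x => (‖fconv f ν x‖₊ : ℝ≥0∞)) volume
      ≤ ν Set.univ * essSup (fun x => (‖f x‖₊ : ℝ≥0∞)) volume
    rcases eq_or_ne (essSup (fun x => (‖f x‖₊ : ℝ≥0∞)) volume) ∞ with hM | hM
    · rcases eq_or_ne (ν Set.univ) 0 with hν0 | hν0
      · have : ν = 0 := by
          ext s hs
          exact le_antisymm (le_trans (measure_mono (Set.subset_univ s)) hν0.le) (zero_le')
        subst this
        simp [fconv, essSup_const_bot]
      · rw [hM, ENNReal.mul_top hν0]
        exact le_top
    · have hae : ∀ᵐ x ∂(volume : Measure 𝕋),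
          (‖f x‖₊ : ℝ≥0∞) ≤ essSup (fun x => (‖f x‖₊ : ℝ≥0∞)) volume :=
        ae_le_essSup
      have hae2 : ∀ᵐ z ∂(volume.prod ν),
          (‖f (z.1 - z.2)‖₊ : ℝ≥0∞) ≤ essSup (fun x => (‖f x‖₊ : ℝ≥0∞)) volume :=
        (qmp ν).tendsto_ae.eventually hae
      have hae3 := Measure.ae_ae_of_ae_prod hae2
      refine essSup_le_of_ae_le _ ?_
      filter_upwards [hae3] with x hx
      calc (‖fconv f ν x‖₊ : ℝ≥0∞) ≤ ∫⁻ y, (‖f (x - y)‖₊ : ℝ≥0∞) ∂ν := hbound x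
        _ ≤ ∫⁻ _, essSup (fun x => (‖f x‖₊ : ℝ≥0∞)) volume ∂ν := lintegral_mono_ae hx
        _ = ν Set.univ * essSup (fun x => (‖f x‖₊ : ℝ≥0∞)) volume := by
            rw [lintegral_const, mul_comm]
  · set q := p.toReal with hqdef
    have hq1 : 1 ≤ q := by
      rw [hqdef, ← ENNReal.toReal_one]
      exact (ENNReal.toReal_le_toReal (by simp) hptop).mpr hp
    have hq0 : (0:ℝ) < q := lt_of_lt_of_le zero_lt_one hq1
    rw [eLpNorm_eq_lintegral_rpow_enorm_toReal hp0 hptop, eLpNorm_eq_lintegral_rpow_enorm_toReal hp0 hptop]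
    have main : ∫⁻ x, (‖fconv f ν x‖₊ : ℝ≥0∞) ^ q ∂volume
        ≤ (ν Set.univ) ^ q * ∫⁻ x, (‖f x‖₊ : ℝ≥0∞) ^ q ∂volume := by
      have hnutop : (ν Set.univ) ^ (q - 1) ≠ ∞ :=
        ENNReal.rpow_ne_top_of_nonneg (by linarith) (measure_ne_top ν _)
      calc ∫⁻ x, (‖fconv f ν x‖₊ : ℝ≥0∞) ^ q ∂volume
          ≤ ∫⁻ x, (ν Set.univ) ^ (q - 1) * ∫⁻ y, (‖f (x - y)‖₊ : ℝ≥0∞) ^ q ∂ν ∂volume := by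
            refine lintegral_mono fun x => ?_
            refine le_trans (ENNReal.rpow_le_rpow (hbound x) (le_of_lt hq0)) ?_
            exact jensen ν ((hf.measurable.comp
              (measurable_const.sub measurable_id)).nnnorm.coe_nnreal_ennreal).aemeasurable hq1
        _ = (ν Set.univ) ^ (q - 1)
            * ∫⁻ x, ∫⁻ y, (‖f (x - y)‖₊ : ℝ≥0∞) ^ q ∂ν ∂volume :=
            lintegral_const_mul' _ _ hnutop
        _ = (ν Set.univ) ^ (q - 1)
            * ∫⁻ y, ∫⁻ x, (‖f (x - y)‖₊ : ℝ≥0∞) ^ q ∂volume ∂ν := by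
            rw [lintegral_lintegral_swap (hFm.pow_const q).aemeasurable]
        _ = (ν Set.univ) ^ (q - 1)
            * ∫⁻ _, (∫⁻ x, (‖f x‖₊ : ℝ≥0∞) ^ q ∂volume) ∂ν := by
            congr 1
            exact lintegral_congr fun y =>
              lint_shift (fun x => (‖f x‖₊ : ℝ≥0∞) ^ q) y
        _ = (ν Set.univ) ^ (q - 1)
            * (ν Set.univ * ∫⁻ x, (‖f x‖₊ : ℝ≥0∞) ^ q ∂volume) := by
            rw [lintegral_const, mul_comm (∫⁻ x, (‖f x‖₊ : ℝ≥0∞) ^ q ∂volume)]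
        _ = (ν Set.univ) ^ q * ∫⁻ x, (‖f x‖₊ : ℝ≥0∞) ^ q ∂volume := by
            rw [← mul_assoc]
            congr 1
            nth_rewrite 2 [← ENNReal.rpow_one (ν Set.univ)]
            rw [← ENNReal.rpow_add_of_nonneg _ _ (by linarith) zero_le_one, sub_add_cancel]
    calc (∫⁻ x, (‖fconv f ν x‖₊ : ℝ≥0∞) ^ q ∂volume) ^ (1/q)
        ≤ ((ν Set.univ) ^ q * ∫⁻ x, (‖f x‖₊ : ℝ≥0∞) ^ q ∂volume) ^ (1/q) :=
          ENNReal.rpow_le_rpow main (by positivity)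
      _ = ν Set.univ * (∫⁻ x, (‖f x‖₊ : ℝ≥0∞) ^ q ∂volume) ^ (1/q) := by
          rw [ENNReal.mul_rpow_of_nonneg _ _ (by positivity), ← ENNReal.rpow_mul,
            mul_one_div, div_self (ne_of_gt hq0), ENNReal.rpow_one]

lemma fconv_congr (ν : Measure 𝕋) [SFinite ν] {f g : 𝕋 → ℝ} (h : f =ᵐ[volume] g) :
    fconv f ν =ᵐ[volume] fconv g ν := by
  have h2 : ∀ᵐ z ∂(volume.prod ν), f (z.1 - z.2) = g (z.1 - z.2) :=
    (qmp ν).tendsto_ae.eventually h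
  filter_upwards [Measure.ae_ae_of_ae_prod h2] with x hx
  exact integral_congr_ae hx

lemma young (ν : Measure 𝕋) [IsFiniteMeasure ν] {f : 𝕋 → ℝ}
    (hf : AEStronglyMeasurable f volume) {p : ℝ≥0∞} (hp : 1 ≤ p) :
    eLpNorm (fconv f ν) p volume ≤ ν Set.univ * eLpNorm f p volume := by
  rw [eLpNorm_congr_ae (fconv_congr ν hf.ae_eq_mk), eLpNorm_congr_ae hf.ae_eq_mk]
  exact young_sm ν hf.stronglyMeasurable_mk hp

lemma integrable_shift (ν : Measure 𝕋) [IsFiniteMeasure ν] {f : 𝕋 → ℝ}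
    (hf : Integrable f volume) :
    Integrable (fun z : 𝕋 × 𝕋 => f (z.1 - z.2)) (volume.prod ν) := by
  have hm : AEStronglyMeasurable (fun z : 𝕋 × 𝕋 => f (z.1 - z.2)) (volume.prod ν) :=
    hf.1.comp_quasiMeasurePreserving (qmp ν)
  refine ⟨hm, ?_⟩
  rw [hasFiniteIntegral_def]
  calc ∫⁻ z, (‖f (z.1 - z.2)‖₊ : ℝ≥0∞) ∂(volume.prod ν)
      = ∫⁻ y, ∫⁻ x, (‖f (x - y)‖₊ : ℝ≥0∞) ∂volume ∂ν :=
        lintegral_prod_symm _ hm.enorm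
    _ = ∫⁻ _, (∫⁻ x, (‖f x‖₊ : ℝ≥0∞) ∂volume) ∂ν :=
        lintegral_congr fun y => lint_shift (fun x => (‖f x‖₊ : ℝ≥0∞)) y
    _ = ν Set.univ * ∫⁻ x, (‖f x‖₊ : ℝ≥0∞) ∂volume := by rw [lintegral_const, mul_comm]
    _ < ∞ := ENNReal.mul_lt_top (measure_lt_top ν _) hf.2

lemma fconv_integrable (ν : Measure 𝕋) [IsFiniteMeasure ν] {f : 𝕋 → ℝ}
    (hf : Integrable f volume) : Integrable (fconv f ν) volume :=
  (integrable_shift ν hf).integral_prod_left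

lemma fconv_sm (ν : Measure 𝕋) [IsFiniteMeasure ν] {f : 𝕋 → ℝ}
    (hfm : StronglyMeasurable f) : StronglyMeasurable (fconv f ν) :=
  (hfm.comp_measurable (measurable_fst.sub measurable_snd)).integral_prod_right'

lemma fconv_sub (ν : Measure 𝕋) [IsFiniteMeasure ν] {f h : 𝕋 → ℝ}
    (hf : Integrable f volume) (hh : Integrable h volume) :
    fconv (fun t => f t - h t) ν =ᵐ[volume] fun x => fconv f ν x - fconv h ν x := by
  filter_upwards [(integrable_shift ν hf).prod_right_ae,
    (integrable_shift ν hh).prod_right_ae] with x h1 h2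
  exact integral_sub h1 h2

lemma mconv_prob (ν ρ : Measure 𝕋) [IsProbabilityMeasure ν] [IsProbabilityMeasure ρ] :
    IsProbabilityMeasure (mconv ν ρ) := by
  constructor
  rw [mconv, Measure.map_apply measurable_add MeasurableSet.univ]
  simp

lemma mconvPow_prob (μ : Measure 𝕋) [IsProbabilityMeasure μ] :
    ∀ n, IsProbabilityMeasure (mconvPow μ n)
  | 0 => by rw [mconvPow]; infer_instance
  | n + 1 => by
    haveI := mconvPow_prob μ n
    rw [mconvPow]
    exact mconv_prob _ _

lemma fconv_mconv (ν ρ : Measure 𝕋) [IsFiniteMeasure ν] [IsFiniteMeasure ρ]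
    {f : 𝕋 → ℝ} (hfm : StronglyMeasurable f) (hf : Integrable f volume) :
    fconv f (mconv ν ρ) =ᵐ[volume] fconv (fconv f ρ) ν := by
  have hK : Integrable (fun z : 𝕋 × 𝕋 × 𝕋 => f (z.1 - z.2.1 - z.2.2))
      (volume.prod (ν.prod ρ)) := by
    have hKm : StronglyMeasurable (fun z : 𝕋 × 𝕋 × 𝕋 => f (z.1 - z.2.1 - z.2.2)) :=
      hfm.comp_measurable ((measurable_fst.sub
        (measurable_fst.comp measurable_snd)).sub (measurable_snd.comp measurable_snd))
    refine ⟨hKm.aestronglyMeasurable, ?_⟩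
    rw [hasFiniteIntegral_def]
    calc ∫⁻ z, (‖f (z.1 - z.2.1 - z.2.2)‖₊ : ℝ≥0∞) ∂(volume.prod (ν.prod ρ))
        = ∫⁻ w, ∫⁻ x, (‖f (x - w.1 - w.2)‖₊ : ℝ≥0∞) ∂volume ∂(ν.prod ρ) :=
          lintegral_prod_symm _ hKm.aestronglyMeasurable.enorm
      _ = ∫⁻ _, (∫⁻ x, (‖f x‖₊ : ℝ≥0∞) ∂volume) ∂(ν.prod ρ) := by
          refine lintegral_congr fun w => ?_
          have h1 : ∀ x : 𝕋, x - w.1 - w.2 = x - (w.1 + w.2) := fun x => by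
            rw [sub_sub]
          simp_rw [h1]
          exact lint_shift (fun x => (‖f x‖₊ : ℝ≥0∞)) (w.1 + w.2)
      _ = (ν.prod ρ) Set.univ * ∫⁻ x, (‖f x‖₊ : ℝ≥0∞) ∂volume := by
          rw [lintegral_const, mul_comm]
      _ < ∞ := ENNReal.mul_lt_top (measure_lt_top _ _) hf.2
  filter_upwards [hK.prod_right_ae] with x hx
  show ∫ z, f (x - z) ∂(mconv ν ρ) = ∫ y, fconv f ρ (x - y) ∂ν
  have hasm : AEStronglyMeasurable (fun z : 𝕋 => f (x - z))
      (Measure.map (fun p : 𝕋 × 𝕋 => p.1 + p.2) (ν.prod ρ)) :=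
    (hfm.comp_measurable (measurable_const.sub measurable_id)).aestronglyMeasurable
  rw [mconv, integral_map measurable_add.aemeasurable hasm]
  have h2 : (fun w : 𝕋 × 𝕋 => f (x - (w.1 + w.2))) = fun w => f (x - w.1 - w.2) := by
    funext w; rw [sub_add_eq_sub_sub]
  rw [h2, integral_prod _ hx]
  rfl

lemma tele (μ : Measure 𝕋) [IsProbabilityMeasure μ] {f : 𝕋 → ℝ}
    (hfm : StronglyMeasurable f) (hf : Integrable f volume)
    {p : ℝ≥0∞} (hp : 1 ≤ p) (k : ℕ) :
    eLpNorm (fun x => f x - fconv f (mconvPow μ k) x) p volume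
      ≤ k * eLpNorm (fun x => f x - fconv f μ x) p volume := by
  induction k with
  | zero =>
    have h0 : ∀ x, fconv f (mconvPow μ 0) x = f x := fun x => by
      rw [mconvPow]
      show ∫ y, f (x - y) ∂(Measure.dirac 0) = f x
      rw [integral_dirac (fun y => f (x - y)) 0, sub_zero]
    simp only [h0, sub_self]
    simp
  | succ k ih =>
    haveI := mconvPow_prob μ k
    set g := fun x => f x - fconv f μ x with hg
    have hsmμ : StronglyMeasurable (fconv f μ) := fconv_sm μ hfm
    have hgm : StronglyMeasurable g := hfm.sub hsmμ
    have hμint : Integrable (fconv f μ) volume := fconv_integrable μ hf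
    have h1 : fconv f (mconvPow μ (k+1)) =ᵐ[volume] fconv (fconv f μ) (mconvPow μ k) := by
      rw [mconvPow]
      exact fconv_mconv (mconvPow μ k) μ hfm hf
    have h2 : fconv g (mconvPow μ k) =ᵐ[volume]
        fun x => fconv f (mconvPow μ k) x - fconv (fconv f μ) (mconvPow μ k) x :=
      fconv_sub _ hf hμint
    have key : (fun x => f x - fconv f (mconvPow μ (k+1)) x) =ᵐ[volume]
        (fun x => (f x - fconv f (mconvPow μ k) x) + fconv g (mconvPow μ k) x) := by
      filter_upwards [h1, h2] with x e1 e2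
      rw [e1, e2]
      ring
    rw [eLpNorm_congr_ae key]
    have hasm1 : AEStronglyMeasurable (fun x => f x - fconv f (mconvPow μ k) x) volume :=
      (hfm.sub (fconv_sm (mconvPow μ k) hfm)).aestronglyMeasurable
    have hasm2 : AEStronglyMeasurable (fconv g (mconvPow μ k)) volume :=
      (fconv_sm (mconvPow μ k) hgm).aestronglyMeasurable
    calc eLpNorm (fun x => (f x - fconv f (mconvPow μ k) x) + fconv g (mconvPow μ k) x) p volume
        ≤ eLpNorm (fun x => f x - fconv f (mconvPow μ k) x) p volume
          + eLpNorm (fconv g (mconvPow μ k)) p volume :=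
          eLpNorm_add_le hasm1 hasm2 hp
      _ ≤ k * eLpNorm g p volume + 1 * eLpNorm g p volume := by
          refine add_le_add ih ?_
          have := young_sm (mconvPow μ k) hgm hp
          rwa [measure_univ] at this
      _ = (k + 1 : ℕ) * eLpNorm g p volume := by
          rw [Nat.cast_succ, add_mul, one_mul]

end Stmt19

end Aux

theorem stmt_19 (μ : Measure (AddCircle (1 : ℝ))) [IsProbabilityMeasure μ]
    (n : ℕ) (hn : 0 < n) (c : ℝ) (hc : 0 < c)
    (hdens : ∀ᵐ x : AddCircle (1 : ℝ),
      ENNReal.ofReal c ≤ (mconvPow μ n).rnDeriv volume x)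
    (p : ℝ≥0∞) (hp : 1 ≤ p) (f : AddCircle (1 : ℝ) → ℝ)
    (hf : MemLp f p volume) (hmean : ∫ x, f x = 0) :
    eLpNorm (fun x => f x - fconv f μ x) p volume
      ≥ ENNReal.ofReal (c / n) * eLpNorm f p volume := by
  classical
  set f₀ := hf.1.mk f with hf₀def
  have hfeq : f =ᵐ[volume] f₀ := hf.1.ae_eq_mk
  have hf₀m : StronglyMeasurable f₀ := hf.1.stronglyMeasurable_mk
  have hf₀p : MemLp f₀ p volume := hf.ae_eq hfeq
  have hf₀int : Integrable f₀ volume := hf₀p.integrable hp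
  have hmean₀ : ∫ x, f₀ x = 0 := by
    rw [← integral_congr_ae hfeq]; exact hmean
  set ρ := mconvPow μ n with hρdef
  haveI hρP : IsProbabilityMeasure ρ := Stmt19.mconvPow_prob μ n
  -- decomposition ρ = ν + c • volume
  set ν := ρ.singularPart volume
    + volume.withDensity (fun x => ρ.rnDeriv volume x - ENNReal.ofReal c) with hνdef
  have hρν : ρ = ν + ENNReal.ofReal c • volume := by
    have hwd : volume.withDensity (ρ.rnDeriv volume)
        = volume.withDensity (fun x => ρ.rnDeriv volume x - ENNReal.ofReal c)
          + ENNReal.ofReal c • volume := by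
      rw [← withDensity_const (μ := (volume : Measure (AddCircle (1:ℝ)))) (c := ENNReal.ofReal c),
        ← withDensity_add_right _ measurable_const]
      refine withDensity_congr_ae ?_
      filter_upwards [hdens] with x hx
      exact (tsub_add_cancel_of_le hx).symm
    rw [hνdef, add_assoc, ← hwd]
    exact (ρ.singularPart_add_rnDeriv volume).symm
  have hνle : ν ≤ ρ := by
    rw [hρν]; exact Measure.le_add_right le_rfl
  haveI hνfin : IsFiniteMeasure ν := by
    constructor
    exact lt_of_le_of_lt (hνle Set.univ) (measure_lt_top ρ _)
  have hνuniv : ν Set.univ + ENNReal.ofReal c = 1 := by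
    have h1 : ρ Set.univ = ν Set.univ + ENNReal.ofReal c * (volume : Measure (AddCircle (1:ℝ))) Set.univ := by
      rw [hρν]; simp [Measure.add_apply, Measure.smul_apply, smul_eq_mul]
    rw [measure_univ, Stmt19.vol_univ, mul_one] at h1
    exact h1.symm
  have hc1 : ENNReal.ofReal c ≤ 1 := by
    rw [← hνuniv]; exact le_add_self
  have hνuniv' : ν Set.univ = 1 - ENNReal.ofReal c := by
    exact ENNReal.eq_sub_of_add_eq (by simp) hνuniv
  -- fconv f₀ ρ = fconv f₀ ν a.e.
  have hρνae : fconv f₀ ρ =ᵐ[volume] fconv f₀ ν := by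
    filter_upwards [(Stmt19.integrable_shift ρ hf₀int).prod_right_ae] with x hx
    have hxν : Integrable (fun y => f₀ (x - y)) ν := hx.mono_measure hνle
    have hxc : Integrable (fun y => f₀ (x - y)) (ENNReal.ofReal c • volume) := by
      refine hx.mono_measure ?_
      rw [hρν]; exact Measure.le_add_left le_rfl
    show ∫ y, f₀ (x - y) ∂ρ = ∫ y, f₀ (x - y) ∂ν
    rw [hρν, integral_add_measure hxν hxc, integral_smul_measure,
      integral_sub_left_eq_self f₀ volume x, hmean₀, smul_zero, add_zero]
  -- main chain
  set a := eLpNorm f₀ p volume with hadef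
  set E := eLpNorm (fun x => f₀ x - fconv f₀ μ x) p volume with hEdef
  have ha_ne : a ≠ ∞ := by
    rw [hadef, ← eLpNorm_congr_ae hfeq]
    exact hf.2.ne
  have htri : a ≤ eLpNorm (fun x => f₀ x - fconv f₀ ρ x) p volume
      + eLpNorm (fconv f₀ ρ) p volume := by
    have hid : f₀ = fun x => (f₀ x - fconv f₀ ρ x) + fconv f₀ ρ x := by
      funext x; ring
    calc a = eLpNorm (fun x => (f₀ x - fconv f₀ ρ x) + fconv f₀ ρ x) p volume := by
          exact hadef.trans (congrArg (fun g => eLpNorm g p volume) hid)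
      _ ≤ _ := eLpNorm_add_le
          ((hf₀m.sub (Stmt19.fconv_sm ρ hf₀m)).aestronglyMeasurable)
          (Stmt19.fconv_sm ρ hf₀m).aestronglyMeasurable hp
  have hyoung : eLpNorm (fconv f₀ ρ) p volume ≤ (1 - ENNReal.ofReal c) * a := by
    rw [eLpNorm_congr_ae hρνae]
    calc eLpNorm (fconv f₀ ν) p volume ≤ ν Set.univ * a :=
          Stmt19.young_sm ν hf₀m hp
      _ = (1 - ENNReal.ofReal c) * a := by rw [hνuniv']
  have htele : eLpNorm (fun x => f₀ x - fconv f₀ ρ x) p volume ≤ n * E :=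
    Stmt19.tele μ hf₀m hf₀int hp n
  have hmain : a ≤ n * E + (1 - ENNReal.ofReal c) * a :=
    le_trans htri (add_le_add htele hyoung)
  have harith : ENNReal.ofReal c * a ≤ n * E := by
    have hsplit : ENNReal.ofReal c * a + (1 - ENNReal.ofReal c) * a = a := by
      rw [← add_mul, add_tsub_cancel_of_le hc1, one_mul]
    have hfin : (1 - ENNReal.ofReal c) * a ≠ ∞ :=
      ENNReal.mul_ne_top (lt_of_le_of_lt tsub_le_self ENNReal.one_lt_top).ne ha_ne
    have h3 : ENNReal.ofReal c * a + (1 - ENNReal.ofReal c) * a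
        ≤ n * E + (1 - ENNReal.ofReal c) * a := by
      rw [hsplit]; exact hmain
    exact (ENNReal.add_le_add_iff_right hfin).mp h3
  -- convert goal
  have hgoalE : eLpNorm (fun x => f x - fconv f μ x) p volume = E := by
    rw [hEdef]
    refine eLpNorm_congr_ae ?_
    filter_upwards [hfeq, Stmt19.fconv_congr μ hfeq] with x h1 h2
    rw [h1, h2]
  have hgoala : eLpNorm f p volume = a := eLpNorm_congr_ae hfeq
  rw [ge_iff_le, hgoalE, hgoala]
  have hn0 : (n : ℝ≥0∞) ≠ 0 := Nat.cast_ne_zero.mpr hn.ne'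
  have hntop : (n : ℝ≥0∞) ≠ ∞ := ENNReal.natCast_ne_top n
  have hofr : ENNReal.ofReal (c / n) = ENNReal.ofReal c / n := by
    rw [ENNReal.ofReal_div_of_pos (by exact_mod_cast hn), ENNReal.ofReal_natCast]
  rw [hofr]
  calc ENNReal.ofReal c / n * a = (ENNReal.ofReal c * a) / n := by
        rw [div_eq_mul_inv, div_eq_mul_inv, mul_right_comm]
    _ ≤ (n * E) / n := ENNReal.div_le_div_right harith _
    _ = E := by rw [mul_comm, mul_div_assoc, ENNReal.div_self hn0 hntop, mul_one]
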